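/- For any hypergraph H=(V,E) and partition A whose parts all have positive volume, if p(H*) (the component partition of the sub-hypergraph of edges internal to A) is a strict refinement of A, then q_H(p(H*)) > q_H(A). -/

import Mathlib

open Classical Finset

variable {V : Type*} [Fintype V] [DecidableEq V]

/-- The degree of a vertex in the hypergraph with edge set `E`:
the number of hyperedges containing it. -/
def hdeg (E : Finset (Finset V)) (v : V) : ℕ := (E.filter (fun e => v ∈ e)).card

/-- The volume of a set of vertices: the sum of their degrees. -/
noncomputable def hvol (E : Finset (Finset V)) (A : Finset V) : ℝ :=
  ∑ v ∈ A, (hdeg E v : ℝ)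

/-- Strict hypergraph modularity of a partition `P`:
`q_H(P) = (1/|E|) ( ∑_{A ∈ P} |{e ∈ E : e ⊆ A}| - ∑_{d ≥ 2} |E_d| ∑_{A ∈ P} (vol A / vol V)^d )`,
where the degree tax is written edgewise as `∑_{e ∈ E} ∑_{A ∈ P} (vol A / vol V)^{|e|}`. -/
noncomputable def hQ (E : Finset (Finset V)) (P : Finpartition (Finset.univ : Finset V)) : ℝ :=
  (1 / (E.card : ℝ)) *
    ((∑ A ∈ P.parts, ((E.filter (fun e => e ⊆ A)).card : ℝ)) -
      ∑ e ∈ E, ∑ A ∈ P.parts, (hvol E A / hvol E Finset.univ) ^ e.card)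

/-- The edges of `E` internal to some part of the partition `P`. -/
def internalEdges (E : Finset (Finset V)) (P : Finpartition (Finset.univ : Finset V)) :
    Finset (Finset V) :=
  E.filter (fun e => ∃ A ∈ P.parts, e ⊆ A)

/-- The partition of `V` into connected components of the hypergraph `(V, E')`
(two vertices are connected when joined by a path of hyperedges). -/
noncomputable def compPartition (E' : Finset (Finset V)) :
    Finpartition (Finset.univ : Finset V) :=
  Finpartition.ofSetoid (Relation.EqvGen.setoid (fun u v => ∃ e ∈ E', u ∈ e ∧ v ∈ e))

lemma sum_pow_le_pow_sum {ι : Type*} (s : Finset ι) (f : ι → ℝ) (hf : ∀ i ∈ s, 0 < f i)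
    {d : ℕ} (hd : 1 ≤ d) :
    ∑ i ∈ s, f i ^ d ≤ (∑ i ∈ s, f i) ^ d := by
  obtain ⟨k, rfl⟩ := Nat.exists_eq_add_of_le hd
  set S := ∑ i ∈ s, f i with hS
  have hS0 : 0 ≤ S := Finset.sum_nonneg fun i hi => (hf i hi).le
  calc ∑ i ∈ s, f i ^ (1 + k) = ∑ i ∈ s, f i * f i ^ k := by
        simp [pow_add, pow_one, mul_comm]
    _ ≤ ∑ i ∈ s, f i * S ^ k := by
        refine Finset.sum_le_sum fun i hi => ?_
        exact mul_le_mul_of_nonneg_left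
          (pow_le_pow_left₀ (hf i hi).le
            (Finset.single_le_sum (fun j hj => (hf j hj).le) hi) k) (hf i hi).le
    _ = S * S ^ k := by rw [← Finset.sum_mul]
    _ = S ^ (1 + k) := by rw [pow_add, pow_one]

lemma sum_pow_lt_pow_sum {ι : Type*} (s : Finset ι) (f : ι → ℝ) (hf : ∀ i ∈ s, 0 < f i)
    {d : ℕ} (hd : 2 ≤ d) (hs : 2 ≤ s.card) :
    ∑ i ∈ s, f i ^ d < (∑ i ∈ s, f i) ^ d := by
  obtain ⟨k, rfl⟩ := Nat.exists_eq_add_of_le hd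
  set S := ∑ i ∈ s, f i with hS
  have hs1 : 1 < s.card := by omega
  have hsne : s.Nonempty := Finset.card_pos.mp (by omega)
  have hlt : ∀ i ∈ s, f i < S := by
    intro i hi
    obtain ⟨j, hj, hji⟩ := Finset.exists_mem_ne hs1 i
    have h1 : f i + ∑ x ∈ s.erase i, f x = S := Finset.add_sum_erase s f hi
    have h2 : 0 < ∑ x ∈ s.erase i, f x :=
      lt_of_lt_of_le (hf j hj)
        (Finset.single_le_sum (fun x hx => (hf x (Finset.mem_of_mem_erase hx)).le)
          (Finset.mem_erase.2 ⟨hji, hj⟩))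
    linarith
  calc ∑ i ∈ s, f i ^ (2 + k) < ∑ i ∈ s, f i * S ^ (1 + k) := by
        refine Finset.sum_lt_sum_of_nonempty hsne fun i hi => ?_
        have : f i ^ (1 + k) < S ^ (1 + k) :=
          pow_lt_pow_left₀ (hlt i hi) (hf i hi).le (by omega)
        calc f i ^ (2 + k) = f i * f i ^ (1 + k) := by ring
          _ < f i * S ^ (1 + k) := by
              exact mul_lt_mul_of_pos_left this (hf i hi)
    _ = S * S ^ (1 + k) := by rw [← Finset.sum_mul]
    _ = S ^ (2 + k) := by ring

-- fibers are pairwise disjoint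
lemma fiber_disjoint (P Q : Finpartition (Finset.univ : Finset V)) :
    (↑Q.parts : Set (Finset V)).PairwiseDisjoint
      (fun B => P.parts.filter (fun p => p ⊆ B)) := by
  intro B hB B' hB' hBB'
  simp only [Function.onFun]
  rw [Finset.disjoint_left]
  rintro p hp hp'
  rw [Finset.mem_filter] at hp hp'
  obtain ⟨v, hv⟩ := P.nonempty_of_mem_parts hp.1
  exact hBB' (Q.eq_of_mem_parts hB hB' (hp.2 hv) (hp'.2 hv))

lemma fiber_biUnion {P Q : Finpartition (Finset.univ : Finset V)} (hle : P ≤ Q) :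
    Q.parts.biUnion (fun B => P.parts.filter (fun p => p ⊆ B)) = P.parts := by
  ext p
  simp only [Finset.mem_biUnion, Finset.mem_filter]
  constructor
  · rintro ⟨B, _, hp, _⟩; exact hp
  · intro hp; obtain ⟨B, hB, hpB⟩ := hle hp; exact ⟨B, hB, hp, hpB⟩

lemma sum_fiber {P Q : Finpartition (Finset.univ : Finset V)} (hle : P ≤ Q)
    (f : Finset V → ℝ) :
    ∑ p ∈ P.parts, f p = ∑ B ∈ Q.parts, ∑ p ∈ P.parts.filter (fun p => p ⊆ B), f p := by
  conv_lhs => rw [← fiber_biUnion hle, Finset.sum_biUnion (fiber_disjoint P Q)]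

lemma part_eq_fiber_biUnion {P Q : Finpartition (Finset.univ : Finset V)} (hle : P ≤ Q)
    {B : Finset V} (hB : B ∈ Q.parts) :
    B = (P.parts.filter (fun p => p ⊆ B)).biUnion id := by
  ext v
  simp only [Finset.mem_biUnion, Finset.mem_filter, id]
  constructor
  · intro hv
    refine ⟨P.part v, ⟨P.part_mem.2 (Finset.mem_univ v), ?_⟩, P.mem_part (Finset.mem_univ v)⟩
    obtain ⟨B', hB', hsub⟩ := hle (P.part_mem.2 (Finset.mem_univ v))
    rwa [Q.eq_of_mem_parts hB' hB (hsub (P.mem_part (Finset.mem_univ v))) hv] at hsub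
  · rintro ⟨p, ⟨_, hpB⟩, hv⟩; exact hpB hv

lemma hvol_fiber (E : Finset (Finset V)) {P Q : Finpartition (Finset.univ : Finset V)}
    (hle : P ≤ Q) {B : Finset V} (hB : B ∈ Q.parts) :
    hvol E B = ∑ p ∈ P.parts.filter (fun p => p ⊆ B), hvol E p := by
  have hd : (↑(P.parts.filter (fun p => p ⊆ B)) : Set (Finset V)).PairwiseDisjoint id :=
    P.disjoint.subset (Finset.coe_subset.mpr (Finset.filter_subset _ _))
  conv_lhs => rw [hvol, part_eq_fiber_biUnion hle hB, Finset.sum_biUnion hd]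
  rfl

lemma coverage_eq_nat (E : Finset (Finset V)) (hE : ∀ e ∈ E, e.Nonempty)
    (Q : Finpartition (Finset.univ : Finset V)) :
    ∑ B ∈ Q.parts, (E.filter (fun e => e ⊆ B)).card = (internalEdges E Q).card := by
  simp only [Finset.card_filter, internalEdges]
  rw [Finset.sum_comm]
  refine Finset.sum_congr rfl fun e he => ?_
  by_cases h : ∃ B ∈ Q.parts, e ⊆ B
  · obtain ⟨B0, hB0, h0⟩ := h
    rw [if_pos ⟨B0, hB0, h0⟩, Finset.sum_eq_single_of_mem B0 hB0]
    · rw [if_pos h0]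
    · intro B hB hBne
      rw [if_neg]
      intro hsub
      obtain ⟨v, hv⟩ := hE e he
      exact hBne (Q.eq_of_mem_parts hB hB0 (hsub hv) (h0 hv))
  · rw [if_neg h, Finset.sum_eq_zero]
    intro B hB
    rw [if_neg]
    exact fun hs => h ⟨B, hB, hs⟩

lemma internal_subset_comp_part (E' : Finset (Finset V)) {e : Finset V} (he : e ∈ E')
    (hene : e.Nonempty) : ∃ p ∈ (compPartition E').parts, e ⊆ p := by
  obtain ⟨v, hv⟩ := hene
  refine ⟨(compPartition E').part v, (Finpartition.part_mem _).2 (Finset.mem_univ v), ?_⟩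
  intro w hw
  show w ∈ (Finpartition.ofSetoid _).part v
  rw [Finpartition.mem_part_ofSetoid_iff_rel]
  exact Relation.EqvGen.rel _ _ ⟨e, he, hv, hw⟩

/-- **A strict refinement by internal-edge components strictly increases modularity.**
Let `H = (V,E)` be a hypergraph with at least one edge, all hyperedges of size at least 2,
and every vertex of positive degree (so all parts have positive volume).  For a partition
`A` of `V`, let `H* = (V, E*)` where `E*` is the set of edges internal to parts of `A`.
If the component partition `p(H*)` is a strict refinement of `A`, then
`q_H(p(H*)) > q_H(A)`. -/
theorem strict_refinement_increases_modularity (E : Finset (Finset V)) (hne : E.Nonempty)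
    (hsize : ∀ e ∈ E, 2 ≤ e.card) (hdpos : ∀ v : V, 0 < hdeg E v)
    (A : Finpartition (Finset.univ : Finset V))
    (hrefine : compPartition (internalEdges E A) ≤ A)
    (hstrict : compPartition (internalEdges E A) ≠ A) :
    hQ E A < hQ E (compPartition (internalEdges E A)) := by
  classical
  set P := compPartition (internalEdges E A) with hPdef
  have hEne : ∀ e ∈ E, e.Nonempty := fun e he =>
    Finset.card_pos.mp (lt_of_lt_of_le (by norm_num) (hsize e he))
  obtain ⟨e0, he0⟩ := hne
  have hVne : (Finset.univ : Finset V).Nonempty := by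
    obtain ⟨v, _⟩ := hEne e0 he0; exact ⟨v, Finset.mem_univ v⟩
  have hvolpos : ∀ p : Finset V, p.Nonempty → 0 < hvol E p := by
    intro p ⟨v, hv⟩
    have h0 : (0:ℝ) < (hdeg E v : ℝ) := by exact_mod_cast hdpos v
    unfold hvol
    exact lt_of_lt_of_le h0 (Finset.single_le_sum (f := fun w => (hdeg E w : ℝ)) (fun w _ => by positivity) hv)
  have hvolV : 0 < hvol E Finset.univ := hvolpos _ hVne
  -- internal edges agree
  have hint : internalEdges E P = internalEdges E A := by
    ext e
    simp only [internalEdges, Finset.mem_filter]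
    constructor
    · rintro ⟨he, p, hp, hep⟩
      obtain ⟨B, hB, hpB⟩ := hrefine hp
      exact ⟨he, B, hB, hep.trans hpB⟩
    · rintro ⟨he, hex⟩
      obtain ⟨p, hp, hep⟩ := internal_subset_comp_part (internalEdges E A)
        (Finset.mem_filter.2 ⟨he, hex⟩) (hEne e he)
      exact ⟨he, p, hp, hep⟩
  -- coverage equality
  have hcov : ∑ B ∈ A.parts, ((E.filter (fun e => e ⊆ B)).card : ℝ)
      = ∑ p ∈ P.parts, ((E.filter (fun e => e ⊆ p)).card : ℝ) := by
    rw [← Nat.cast_sum, ← Nat.cast_sum, coverage_eq_nat E hEne A, coverage_eq_nat E hEne P, hint]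
  -- fiber nonempty
  have hfib_ne : ∀ B ∈ A.parts, (P.parts.filter (fun p => p ⊆ B)).Nonempty := by
    intro B hB
    obtain ⟨v, hv⟩ := A.nonempty_of_mem_parts hB
    have := part_eq_fiber_biUnion hrefine hB
    rw [this] at hv
    obtain ⟨p, hp, _⟩ := Finset.mem_biUnion.mp hv
    exact ⟨p, hp⟩
  -- strictness witness
  have hwit : ∃ B ∈ A.parts, 2 ≤ (P.parts.filter (fun p => p ⊆ B)).card := by
    by_contra h
    push_neg at h
    have hfone : ∀ B ∈ A.parts, P.parts.filter (fun p => p ⊆ B) = {B} := by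
      intro B hB
      have hc1 : (P.parts.filter (fun p => p ⊆ B)).card = 1 := by
        have := Finset.card_pos.mpr (hfib_ne B hB)
        have := h B hB
        omega
      obtain ⟨p, hp⟩ := Finset.card_eq_one.mp hc1
      have hBp : B = p := by
        have h2 := part_eq_fiber_biUnion hrefine hB
        rw [hp] at h2
        rw [h2, Finset.singleton_biUnion, id]
      rw [hp, hBp]
    apply hstrict
    apply Finpartition.ext
    apply Finset.Subset.antisymm
    · intro p hp
      obtain ⟨B, hB, hpB⟩ := hrefine hp
      have : p ∈ P.parts.filter (fun q => q ⊆ B) := Finset.mem_filter.2 ⟨hp, hpB⟩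
      rw [hfone B hB] at this
      rw [Finset.mem_singleton.mp this]
      exact hB
    · intro B hB
      have : B ∈ P.parts.filter (fun q => q ⊆ B) := by rw [hfone B hB]; exact Finset.mem_singleton_self B
      exact (Finset.mem_filter.mp this).1
  obtain ⟨B0, hB0, hB02⟩ := hwit
  -- per-edge tax strict inequality
  have htax : ∀ e ∈ E,
      ∑ p ∈ P.parts, (hvol E p / hvol E Finset.univ) ^ e.card
        < ∑ B ∈ A.parts, (hvol E B / hvol E Finset.univ) ^ e.card := by
    intro e he
    rw [sum_fiber hrefine (fun p => (hvol E p / hvol E Finset.univ) ^ e.card)]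
    have key : ∀ B ∈ A.parts,
        ∑ p ∈ P.parts.filter (fun p => p ⊆ B), (hvol E p / hvol E Finset.univ) ^ e.card
          ≤ (hvol E B / hvol E Finset.univ) ^ e.card := by
      intro B hB
      have hsum : ∑ p ∈ P.parts.filter (fun p => p ⊆ B), hvol E p / hvol E Finset.univ
          = hvol E B / hvol E Finset.univ := by
        rw [← Finset.sum_div, ← hvol_fiber E hrefine hB]
      rw [← hsum]
      exact sum_pow_le_pow_sum _ _
        (fun p hp => div_pos (hvolpos p (P.nonempty_of_mem_parts (Finset.mem_filter.mp hp).1)) hvolV)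
        (by have := hsize e he; omega)
    refine Finset.sum_lt_sum (fun B hB => key B hB) ⟨B0, hB0, ?_⟩
    have hsum : ∑ p ∈ P.parts.filter (fun p => p ⊆ B0), hvol E p / hvol E Finset.univ
        = hvol E B0 / hvol E Finset.univ := by
      rw [← Finset.sum_div, ← hvol_fiber E hrefine hB0]
    rw [← hsum]
    exact sum_pow_lt_pow_sum _ _
      (fun p hp => div_pos (hvolpos p (P.nonempty_of_mem_parts (Finset.mem_filter.mp hp).1)) hvolV)
      (hsize e he) hB02
  have htax' : ∑ e ∈ E, ∑ p ∈ P.parts, (hvol E p / hvol E Finset.univ) ^ e.card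
      < ∑ e ∈ E, ∑ B ∈ A.parts, (hvol E B / hvol E Finset.univ) ^ e.card :=
    Finset.sum_lt_sum_of_nonempty ⟨e0, he0⟩ htax
  unfold hQ
  have hc : 0 < 1 / (E.card : ℝ) := by
    have : 0 < E.card := Finset.card_pos.mpr ⟨e0, he0⟩
    positivity
  apply mul_lt_mul_of_pos_left _ hc
  rw [hcov]
  exact sub_lt_sub_left htax' _
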